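/- Additive disjunction cut: if ⊩_B^L φ⊕ψ, φ ⊩_B^K χ, and ψ ⊩_B^K χ, then ⊩_B^{L⊎K} χ. -/
import Mathlib


abbrev Atom := ℕ
abbrev ASeq := Multiset Atom × Atom
abbrev Box := Multiset ASeq
abbrev ARule := Multiset Box × Box × Atom
abbrev Base := Set ARule

/-- An atom `d` is persistent in `B` if there is a rule `⟨∅, S, d⟩ ∈ B` with `S` nonempty. -/
def Persistent (B : Base) (d : Atom) : Prop :=
  ∃ S : Box, S ≠ 0 ∧ ((0 : Multiset Box), S, d) ∈ B

/-- Atomic derivability in a base. -/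
inductive Deriv (B : Base) : Multiset Atom → Atom → Prop
  | ref (p : Atom) : Deriv B {p} p
  | app (S : Box) (p : Atom)
      (bc : List (Box × Multiset Atom))
      (dc : List (Atom × Multiset Atom))
      (hrule : ((↑(bc.map Prod.fst) : Multiset Box), S, p) ∈ B)
      (hpers : ∀ x ∈ dc, Persistent B x.1)
      (hbox : ∀ x ∈ bc, ∀ s ∈ x.1, Deriv B (x.2 + s.1) s.2)
      (hd : ∀ x ∈ dc, Deriv B x.2 x.1)
      (hS : ∀ s ∈ S, Deriv B ((↑(dc.map Prod.fst) : Multiset Atom) + s.1) s.2) :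
      Deriv B ((bc.map Prod.snd).sum + (dc.map Prod.snd).sum) p

/-- Formulas of intuitionistic linear logic. -/
inductive Fml : Type
  | atom : Atom → Fml
  | top : Fml
  | zero : Fml
  | one : Fml
  | limp : Fml → Fml → Fml
  | tens : Fml → Fml → Fml
  | wth : Fml → Fml → Fml
  | plus : Fml → Fml → Fml
  | bang : Fml → Fml
deriving DecidableEq

/-- The degree of a formula. -/
def deg : Fml → ℕ
  | .atom _ => 1
  | .top => 2
  | .zero => 2
  | .one => 2
  | .limp φ ψ => deg φ + deg ψ + 1
  | .tens φ ψ => deg φ + deg ψ + 1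
  | .wth φ ψ => deg φ + deg ψ + 1
  | .plus φ ψ => deg φ + deg ψ + 1
  | .bang φ => deg φ + 1

theorem one_le_deg (φ : Fml) : 1 ≤ deg φ := by
  cases φ <;> simp [deg] <;> omega

mutual
  /-- Support `⊩_B^L φ` (empty left-hand side). -/
  def Supp : Base → Multiset Atom → Fml → Prop
    | B, L, .atom p => Deriv B L p
    | _, _, .top => True
    | B, L, .zero => ∀ (K : Multiset Atom) (p : Atom), Supp B (L + K) (.atom p)
    | B, L, .one => ∀ C : Base, B ⊆ C → ∀ (K : Multiset Atom) (p : Atom),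
        Supp C K (.atom p) → Supp C (L + K) (.atom p)
    | B, L, .limp φ ψ => SuppInf1 B L φ ψ
    | B, L, .tens φ ψ => ∀ C : Base, B ⊆ C → ∀ (K : Multiset Atom) (p : Atom),
        SuppInf2 C K φ ψ (.atom p) → Supp C (L + K) (.atom p)
    | B, L, .wth φ ψ => Supp B L φ ∧ Supp B L ψ
    | B, L, .plus φ ψ => ∀ C : Base, B ⊆ C → ∀ (K : Multiset Atom) (p : Atom),
        SuppInf1 C K φ (.atom p) → SuppInf1 C K ψ (.atom p) → Supp C (L + K) (.atom p)
    | B, L, .bang φ => ∀ C : Base, B ⊆ C → ∀ (K : Multiset Atom) (p : Atom),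
        (∀ D : Base, C ⊆ D → Supp D 0 φ → Supp D K (.atom p)) → Supp C (L + K) (.atom p)
  termination_by B L φ => 2 * deg φ
  decreasing_by
    all_goals
      try simp only [deg]
      try have h1 := one_le_deg φ
      try have h2 := one_le_deg ψ
      try have h3 := one_le_deg χ
      try have h4 := one_le_deg α
      try have h5 := one_le_deg β
      omega

  /-- The (Inf) clause for a singleton context `{φ} ⊩_B^L χ`. -/
  def SuppInf1 : Base → Multiset Atom → Fml → Fml → Prop
    | B, L, .bang α, χ => ∀ C : Base, B ⊆ C → Supp C 0 α → Supp C L χ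
    | B, L, φ, χ => ∀ C : Base, B ⊆ C → ∀ K : Multiset Atom,
        Supp C K φ → Supp C (L + K) χ
  termination_by B L φ χ => 2 * (deg φ + deg χ) - 1
  decreasing_by
    all_goals
      try simp only [deg]
      try have h1 := one_le_deg φ
      try have h2 := one_le_deg ψ
      try have h3 := one_le_deg χ
      try have h4 := one_le_deg α
      try have h5 := one_le_deg β
      omega

  /-- The (Inf) clause for a two-element context `{φ, ψ} ⊩_B^L χ`. -/
  def SuppInf2 : Base → Multiset Atom → Fml → Fml → Fml → Prop
    | B, L, .bang α, .bang β, χ => ∀ C : Base, B ⊆ C →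
        Supp C 0 α → Supp C 0 β → Supp C L χ
    | B, L, .bang α, ψ, χ => ∀ C : Base, B ⊆ C → ∀ K : Multiset Atom,
        Supp C 0 α → Supp C K ψ → Supp C (L + K) χ
    | B, L, φ, .bang β, χ => ∀ C : Base, B ⊆ C → ∀ K : Multiset Atom,
        Supp C 0 β → Supp C K φ → Supp C (L + K) χ
    | B, L, φ, ψ, χ => ∀ C : Base, B ⊆ C → ∀ K₁ K₂ : Multiset Atom,
        Supp C K₁ φ → Supp C K₂ ψ → Supp C (L + K₁ + K₂) χ
  termination_by B L φ ψ χ => 2 * (deg φ + deg ψ + deg χ) - 1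
  decreasing_by
    all_goals
      try simp only [deg]
      try have h1 := one_le_deg φ
      try have h2 := one_le_deg ψ
      try have h3 := one_le_deg χ
      try have h4 := one_le_deg α
      try have h5 := one_le_deg β
      omega
end

/-- Is the formula a `!`-formula? -/
def isBang : Fml → Bool
  | .bang _ => true
  | _ => false

/-- Strip a top-level `!`. -/
def unbang : Fml → Fml
  | .bang φ => φ
  | φ => φ

/-- Support for a multiset of formulas: the `(⊎)` clause. -/
def SuppMS (B : Base) (L : Multiset Atom) (Γ : Multiset Fml) : Prop :=
  ∃ l : List (Fml × Multiset Atom), (↑(l.map Prod.fst) : Multiset Fml) = Γ ∧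
    (l.map Prod.snd).sum = L ∧ ∀ x ∈ l, Supp B x.2 x.1

/-- The official (Inf) clause: `Γ ⊩_B^L φ`, where `Γ = !Δ ⊎ Θ`. -/
def SuppSeq (B : Base) (L : Multiset Atom) (Γ : Multiset Fml) (φ : Fml) : Prop :=
  ∀ C : Base, B ⊆ C → ∀ K : Multiset Atom,
    SuppMS C 0 ((Γ.filter (fun ψ => isBang ψ = true)).map unbang) →
    SuppMS C K (Γ.filter (fun ψ => isBang ψ = false)) →
    Supp C (L + K) φ

/-- Validity of a sequent `(Γ : φ)`. -/
def Valid (Γ : Multiset Fml) (φ : Fml) : Prop :=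
  ∀ B : Base, SuppSeq B 0 Γ φ


lemma derivMono {B C : Base} (h : B ⊆ C) {L : Multiset Atom} {p : Atom}
    (hd : Deriv B L p) : Deriv C L p := by
  induction hd with
  | ref p => exact .ref p
  | app S p bc dc hrule hpers hbox hd hS ih1 ih2 ih3 =>
    exact .app S p bc dc (h hrule)
      (fun x hx => (hpers x hx).imp (fun S' hS' => ⟨hS'.1, h hS'.2⟩))
      ih1 ih2 ih3

lemma supp_atom {B : Base} {L : Multiset Atom} {p : Atom} :
    Supp B L (.atom p) ↔ Deriv B L p := by simp only [Supp]

lemma supp_zero {B : Base} {L : Multiset Atom} :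
    Supp B L .zero ↔ ∀ (K : Multiset Atom) (p : Atom), Supp B (L + K) (.atom p) := by
  simp only [Supp]

lemma supp_one {B : Base} {L : Multiset Atom} :
    Supp B L .one ↔ ∀ C : Base, B ⊆ C → ∀ (K : Multiset Atom) (p : Atom),
      Supp C K (.atom p) → Supp C (L + K) (.atom p) := by
  simp only [Supp]

lemma supp_limp {B : Base} {L : Multiset Atom} {φ ψ : Fml} :
    Supp B L (.limp φ ψ) ↔ SuppInf1 B L φ ψ := by
  simp only [Supp]

lemma supp_tens {B : Base} {L : Multiset Atom} {φ ψ : Fml} :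
    Supp B L (.tens φ ψ) ↔ ∀ C : Base, B ⊆ C → ∀ (K : Multiset Atom) (p : Atom),
      SuppInf2 C K φ ψ (.atom p) → Supp C (L + K) (.atom p) := by
  simp only [Supp]

lemma supp_wth {B : Base} {L : Multiset Atom} {φ ψ : Fml} :
    Supp B L (.wth φ ψ) ↔ Supp B L φ ∧ Supp B L ψ := by
  simp only [Supp]

lemma supp_plus {B : Base} {L : Multiset Atom} {φ ψ : Fml} :
    Supp B L (.plus φ ψ) ↔ ∀ C : Base, B ⊆ C → ∀ (K : Multiset Atom) (p : Atom),
      SuppInf1 C K φ (.atom p) → SuppInf1 C K ψ (.atom p) → Supp C (L + K) (.atom p) := by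
  simp only [Supp]

lemma supp_bang {B : Base} {L : Multiset Atom} {φ : Fml} :
    Supp B L (.bang φ) ↔ ∀ C : Base, B ⊆ C → ∀ (K : Multiset Atom) (p : Atom),
      (∀ D : Base, C ⊆ D → Supp D 0 φ → Supp D K (.atom p)) → Supp C (L + K) (.atom p) := by
  simp only [Supp]

lemma inf1Mono {B C : Base} (h : B ⊆ C) {L : Multiset Atom} {φ χ : Fml}
    (hx : SuppInf1 B L φ χ) : SuppInf1 C L φ χ := by
  cases φ <;> simp only [SuppInf1] at hx ⊢ <;>
    exact fun D hD => hx D (h.trans hD)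

lemma inf2Mono {B C : Base} (h : B ⊆ C) {L : Multiset Atom} {φ ψ χ : Fml}
    (hx : SuppInf2 B L φ ψ χ) : SuppInf2 C L φ ψ χ := by
  cases φ <;> cases ψ <;> simp only [SuppInf2] at hx ⊢ <;>
    exact fun D hD => hx D (h.trans hD)

lemma suppMono {B C : Base} (h : B ⊆ C) {L : Multiset Atom} {φ : Fml}
    (hx : Supp B L φ) : Supp C L φ := by
  induction φ generalizing B C L with
  | atom p => exact supp_atom.mpr (derivMono h (supp_atom.mp hx))
  | top => simp only [Supp]
  | zero =>
    rw [supp_zero] at hx ⊢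
    exact fun K p => supp_atom.mpr (derivMono h (supp_atom.mp (hx K p)))
  | one =>
    rw [supp_one] at hx ⊢
    exact fun D hD => hx D (h.trans hD)
  | limp φ ψ _ _ =>
    rw [supp_limp] at hx ⊢
    exact inf1Mono h hx
  | tens φ ψ _ _ =>
    rw [supp_tens] at hx ⊢
    exact fun D hD => hx D (h.trans hD)
  | wth φ ψ ih1 ih2 =>
    rw [supp_wth] at hx ⊢
    exact ⟨ih1 h hx.1, ih2 h hx.2⟩
  | plus φ ψ _ _ =>
    rw [supp_plus] at hx ⊢
    exact fun D hD => hx D (h.trans hD)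
  | bang φ _ =>
    rw [supp_bang] at hx ⊢
    exact fun D hD => hx D (h.trans hD)

/-- Cut at an atom: if `N` supports `φ` over `D` and `{φ} ⊩_C^K p` with `C ⊆ D`,
then `⊩_D^{N+K} p`. -/
lemma cut1 {C D : Base} (hCD : C ⊆ D) {N K : Multiset Atom} {φ : Fml} {p : Atom}
    (hφ : Supp D N φ) (hinf : SuppInf1 C K φ (.atom p)) :
    Supp D (N + K) (.atom p) := by
  cases φ with
  | bang α =>
    rw [supp_bang] at hφ
    simp only [SuppInf1] at hinf
    exact hφ D (le_refl _) K p (fun F hF h0 => hinf F (hCD.trans hF) h0)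
  | _ =>
    simp only [SuppInf1] at hinf
    rw [add_comm]
    exact hinf D hCD N hφ

/-- Atomic completeness: if `M` behaves like `χ` at all atoms over all extensions,
then `M` supports `χ`. -/
lemma atomicComplete (χ : Fml) : ∀ (B : Base) (M : Multiset Atom),
    (∀ C : Base, B ⊆ C → ∀ (K : Multiset Atom) (p : Atom),
      SuppInf1 C K χ (.atom p) → Supp C (M + K) (.atom p)) →
    Supp B M χ := by
  induction χ with
  | atom q =>
    intro B M H
    have h0 : SuppInf1 B 0 (.atom q) (.atom q) := by
      simp only [SuppInf1]
      intro D _ N hN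
      rwa [zero_add]
    simpa using H B (le_refl _) 0 q h0
  | top => intro B M H; simp only [Supp]
  | zero =>
    intro B M H
    rw [supp_zero]
    intro K p
    apply H B (le_refl _) K p
    simp only [SuppInf1]
    intro D hD N hz
    rw [supp_zero] at hz
    rw [add_comm]
    exact hz K p
  | one =>
    intro B M H
    rw [supp_one]
    intro C hC K p hK
    apply H C hC K p
    simp only [SuppInf1]
    intro D hD N h1
    rw [supp_one] at h1
    rw [add_comm]
    exact h1 D (le_refl _) K p (suppMono hD hK)
  | limp φ ψ ihφ ihψ =>
    intro B M H
    rw [supp_limp]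
    cases φ with
    | bang α =>
      simp only [SuppInf1]
      intro C hC hα
      apply ihψ C M
      intro D hD K p hinf
      apply H D (hC.trans hD) K p
      simp only [SuppInf1]
      intro E hE N' hlimp
      rw [supp_limp] at hlimp
      simp only [SuppInf1] at hlimp
      have hψ : Supp E N' ψ := hlimp E (le_refl _) (suppMono (hD.trans hE) hα)
      rw [add_comm]
      exact cut1 hE hψ hinf
    | _ =>
      simp only [SuppInf1]
      intro C hC N hφ
      apply ihψ C (M + N)
      intro D hD K p hinf
      have key : Supp D (M + (N + K)) (.atom p) := by
        apply H D (hC.trans hD) (N + K) p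
        simp only [SuppInf1]
        intro E hE N' hlimp
        rw [supp_limp] at hlimp
        simp only [SuppInf1] at hlimp
        have hψ : Supp E (N' + N) ψ :=
          hlimp E (le_refl _) N (suppMono (hD.trans hE) hφ)
        have h2 := cut1 hE hψ hinf
        have heq : N + K + N' = N' + N + K := by
          rw [add_comm, ← add_assoc]
        rw [heq]
        exact h2
      rwa [← add_assoc] at key
  | tens φ ψ _ _ =>
    intro B M H
    rw [supp_tens]
    intro C hC K p hinf2
    apply H C hC K p
    simp only [SuppInf1]
    intro D hD N htens
    rw [supp_tens] at htens
    rw [add_comm]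
    exact htens D (le_refl _) K p (inf2Mono hD hinf2)
  | wth φ ψ ihφ ihψ =>
    intro B M H
    rw [supp_wth]
    constructor
    · apply ihφ B M
      intro C hC K p hinf
      apply H C hC K p
      simp only [SuppInf1]
      intro D hD N hwth
      rw [supp_wth] at hwth
      rw [add_comm]
      exact cut1 hD hwth.1 hinf
    · apply ihψ B M
      intro C hC K p hinf
      apply H C hC K p
      simp only [SuppInf1]
      intro D hD N hwth
      rw [supp_wth] at hwth
      rw [add_comm]
      exact cut1 hD hwth.2 hinf
  | plus φ ψ _ _ =>
    intro B M H
    rw [supp_plus]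
    intro C hC K p hφ hψ
    apply H C hC K p
    simp only [SuppInf1]
    intro D hD N hplus
    rw [supp_plus] at hplus
    rw [add_comm]
    exact hplus D (le_refl _) K p (inf1Mono hD hφ) (inf1Mono hD hψ)
  | bang φ _ =>
    intro B M H
    rw [supp_bang]
    intro C hC K p h'
    apply H C hC K p
    simp only [SuppInf1]
    exact h'

lemma suppMS_nil {B : Base} : SuppMS B 0 0 :=
  ⟨[], rfl, rfl, by simp⟩

lemma suppMS_single {B : Base} {N : Multiset Atom} {φ : Fml} (h : Supp B N φ) :
    SuppMS B N {φ} :=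
  ⟨[(φ, N)], by simp, by simp, by
    rintro x hx
    simp only [List.mem_singleton] at hx
    subst hx
    exact h⟩

lemma seqToInf {B C : Base} (hC : B ⊆ C) {K K' : Multiset Atom} {φ χ : Fml} {p : Atom}
    (h2 : SuppSeq B K {φ} χ) (hinf : SuppInf1 C K' χ (.atom p)) :
    SuppInf1 C (K + K') φ (.atom p) := by
  cases φ
  case bang α =>
    simp only [SuppInf1]
    intro D hD hα
    have key : Supp D (K + 0) χ := by
      apply h2 D (hC.trans hD) 0
      · simp only [Multiset.filter_singleton, isBang, if_pos, Multiset.map_singleton, unbang]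
        exact suppMS_single hα
      · simp [Multiset.filter_singleton, isBang]
        exact suppMS_nil
    rw [add_zero] at key
    exact cut1 hD key hinf
  all_goals
    simp only [SuppInf1]
    intro D hD N hφ
    have key : Supp D (K + N) χ := by
      apply h2 D (hC.trans hD) N
      · simp [Multiset.filter_singleton, isBang]
        exact suppMS_nil
      · simp [Multiset.filter_singleton, isBang]
        exact suppMS_single hφ
    have h3 := cut1 hD key hinf
    have heq : K + K' + N = K + N + K' := by
      rw [add_assoc, add_comm K' N, ← add_assoc]
    rw [heq]
    exact h3
theorem plus_cut (B : Base) (L K : Multiset Atom) (φ ψ χ : Fml)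
    (h1 : Supp B L (.plus φ ψ)) (h2 : SuppSeq B K {φ} χ) (h3 : SuppSeq B K {ψ} χ) :
    Supp B (L + K) χ := by
  apply atomicComplete
  intro C hC K' p hinf
  rw [supp_plus] at h1
  have hφi := seqToInf hC h2 hinf
  have hψi := seqToInf hC h3 hinf
  have := h1 C hC (K + K') p hφi hψi
  rwa [← add_assoc] at this
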